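/- Let p ≥ 3 be a prime and let 3 ≤ r < s be integers with (r-1) dividing (s-1), and set q = (s-1)/(r-1) ∈ ℤ. Then min h_p = (1/(p^q - 1)) · ( r - 1 - (1/(p^q - 1)) · (1 - 1/p^{q(r-1)}) ). -/

import Mathlib

/-- `A(s,r)`: admissible exponent tuples, viewed as functions `ℕ → ℤ` whose relevant
entries are indices `0,…,r-1`: strictly increasing with `a 0 = 0` and `a (r-1) = s-1`. -/
def Admissible (s r : ℕ) (a : ℕ → ℤ) : Prop :=
  a 0 = 0 ∧ a (r - 1) = (s : ℤ) - 1 ∧ ∀ i, i + 1 < r → a i < a (i + 1)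

/-- `h_p(x) = Σ_{k<i≤r} p^{-(x_i - x_k)}` (indices `0,…,r-1`). -/
noncomputable def hp (p r : ℕ) (a : ℕ → ℤ) : ℝ :=
  ∑ k ∈ Finset.range r, ∑ i ∈ Finset.range r,
    if k < i then (p : ℝ) ^ (a k - a i) else 0



open Finset

/-- Auxiliary: `h_p` expressed via gap vectors. -/
noncomputable def Gg (p r : ℕ) (g : ℕ → ℤ) : ℝ :=
  ∑ k ∈ Finset.range r, ∑ i ∈ Finset.range r,
    if k < i then (p : ℝ) ^ (-(∑ j ∈ Finset.Ico k i, g j)) else 0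

theorem mygeom_le (x : ℝ) (h0 : 0 ≤ x) (h1 : x < 1) (n : ℕ) :
    ∑ i ∈ Finset.range n, x^i ≤ 1/(1-x) := by
  rw [geom_sum_eq (by linarith)]
  have hx : (0:ℝ) < 1 - x := by linarith
  have h2 : (x^n - 1)/(x - 1) = (1 - x^n)/(1-x) := by
    rw [← neg_div_neg_eq]; ring_nf
  rw [h2]
  have hxn : 0 ≤ x ^ n := pow_nonneg h0 n
  gcongr
  linarith

theorem Gg_congr (p r : ℕ) (g g' : ℕ → ℤ) (h : ∀ j, j < r - 1 → g j = g' j) :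
    Gg p r g = Gg p r g' := by
  unfold Gg
  refine Finset.sum_congr rfl fun k hk => Finset.sum_congr rfl fun i hi => ?_
  by_cases hki : k < i
  · simp only [if_pos hki]
    congr 2
    refine Finset.sum_congr rfl fun j hj => ?_
    rw [Finset.mem_Ico] at hj
    have hi' : i < r := Finset.mem_range.mp hi
    exact h j (by omega)
  · simp [hki]

theorem hp_eq_Gg (p r : ℕ) (a : ℕ → ℤ) :
    hp p r a = Gg p r (fun j => a (j+1) - a j) := by
  unfold hp Gg
  refine Finset.sum_congr rfl fun k hk => Finset.sum_congr rfl fun i hi => ?_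
  by_cases hki : k < i
  · simp only [if_pos hki]
    congr 1
    rw [Finset.sum_Ico_eq_sub _ hki.le, Finset.sum_range_sub, Finset.sum_range_sub]
    ring
  · simp [hki]

theorem sumF (t : ℝ) (h0 : 0 < t) (h1 : t < 1) :
    ∀ r : ℕ, 1 ≤ r →
    ∑ k ∈ Finset.range r, ∑ i ∈ Finset.range r, (if k < i then t^(i-k) else 0)
      = (t/(1-t)) * (((r:ℝ)-1) - (t/(1-t)) * (1 - t^(r-1))) := by
  have ht1 : t ≠ 1 := ne_of_lt h1
  have ht1' : (1:ℝ) - t ≠ 0 := by intro h; apply ht1; linarith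
  have ht2 : t - 1 ≠ 0 := by intro h; apply ht1; linarith
  intro r hr
  induction r, hr using Nat.le_induction with
  | base => norm_num
  | succ n hn ih =>
    rw [Finset.sum_range_succ]
    have hlast : ∑ i ∈ Finset.range (n+1), (if n < i then t^(i-n) else 0) = 0 := by
      apply Finset.sum_eq_zero
      intro i hi
      rw [Finset.mem_range] at hi
      rw [if_neg (by omega)]
    have hcol : ∀ k ∈ Finset.range n,
        ∑ i ∈ Finset.range (n+1), (if k < i then t^(i-k) else 0)
        = (∑ i ∈ Finset.range n, (if k < i then t^(i-k) else 0)) + t^(n-k) := by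
      intro k hk
      rw [Finset.sum_range_succ, if_pos (Finset.mem_range.mp hk)]
    rw [Finset.sum_congr rfl hcol, Finset.sum_add_distrib, ih, hlast]
    have hrefl : ∑ k ∈ Finset.range n, t^(n-k) = ∑ k ∈ Finset.range n, t^(k+1) := by
      have := Finset.sum_range_reflect (fun u => t^(u+1)) n
      calc ∑ k ∈ Finset.range n, t^(n-k)
          = ∑ k ∈ Finset.range n, t^(n - 1 - k + 1) := by
            refine Finset.sum_congr rfl fun k hk => ?_
            rw [Finset.mem_range] at hk
            congr 1; omega
        _ = _ := this
    rw [hrefl]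
    have hgeo : ∑ k ∈ Finset.range n, t^(k+1) = (t/(1-t)) * (1 - t^n) := by
      have : ∑ k ∈ Finset.range n, t^(k+1) = t * ∑ k ∈ Finset.range n, t^k := by
        rw [Finset.mul_sum]
        exact Finset.sum_congr rfl fun k _ => by ring
      rw [this, geom_sum_eq ht1]
      field_simp
      ring
    rw [hgeo]
    obtain ⟨m, rfl⟩ : ∃ m, n = m + 1 := ⟨n - 1, by omega⟩
    have e1 : m + 1 + 1 - 1 = m + 1 := by omega
    have e2 : m + 1 - 1 = m := by omega
    rw [e1, e2]
    have e3 : t^(m+1) = t^m * t := by rw [pow_succ]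
    rw [e3]
    push_cast
    field_simp
    ring

theorem Gg_move (p r : ℕ) (hp3 : 3 ≤ p) (g : ℕ → ℤ) (I J : ℕ)
    (hI : I < r - 1) (hJ : J < r - 1) (hne : I ≠ J)
    (hg1 : ∀ j, j < r - 1 → 1 ≤ g j) (hgap : g I + 2 ≤ g J) :
    Gg p r (fun j => g j + (if j = I then 1 else 0) - (if j = J then 1 else 0)) < Gg p r g := by
  have hc0 : (0:ℝ) < (p:ℝ) := by positivity
  have hc3 : (3:ℝ) ≤ (p:ℝ) := by exact_mod_cast hp3
  have hc1 : (1:ℝ) < (p:ℝ) := by linarith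
  have hcne : (p:ℝ) ≠ 0 := ne_of_gt hc0
  set c : ℝ := (p:ℝ) with hc
  -- the two correction sums
  set A : ℝ := ∑ k ∈ Finset.range r, ∑ i ∈ Finset.range r,
    (if k < i ∧ (k ≤ I ∧ I < i) ∧ ¬(k ≤ J ∧ J < i) then c ^ (-(∑ j ∈ Finset.Ico k i, g j)) else 0)
    with hA
  set B : ℝ := ∑ k ∈ Finset.range r, ∑ i ∈ Finset.range r,
    (if k < i ∧ (k ≤ J ∧ J < i) ∧ ¬(k ≤ I ∧ I < i) then c ^ (-(∑ j ∈ Finset.Ico k i, g j)) else 0)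
    with hB
  -- decomposition
  have key : Gg p r (fun j => g j + (if j = I then 1 else 0) - (if j = J then 1 else 0))
      = Gg p r g + (c⁻¹ - 1) * A + (c - 1) * B := by
    have point : ∀ k ∈ Finset.range r, ∀ i ∈ Finset.range r,
        (if k < i then c ^ (-(∑ j ∈ Finset.Ico k i,
            (g j + (if j = I then 1 else 0) - (if j = J then 1 else 0)))) else 0)
        = (if k < i then c ^ (-(∑ j ∈ Finset.Ico k i, g j)) else 0)
          + (c⁻¹ - 1) * (if k < i ∧ (k ≤ I ∧ I < i) ∧ ¬(k ≤ J ∧ J < i)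
              then c ^ (-(∑ j ∈ Finset.Ico k i, g j)) else 0)
          + (c - 1) * (if k < i ∧ (k ≤ J ∧ J < i) ∧ ¬(k ≤ I ∧ I < i)
              then c ^ (-(∑ j ∈ Finset.Ico k i, g j)) else 0) := by
      intro k _ i _
      by_cases hki : k < i
      · have hS : ∑ j ∈ Finset.Ico k i, (g j + (if j = I then 1 else 0) - (if j = J then 1 else 0))
            = (∑ j ∈ Finset.Ico k i, g j) + (if I ∈ Finset.Ico k i then 1 else 0)
              - (if J ∈ Finset.Ico k i then 1 else 0) := by
          rw [Finset.sum_sub_distrib, Finset.sum_add_distrib, Finset.sum_ite_eq',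
            Finset.sum_ite_eq']
        set S : ℤ := ∑ j ∈ Finset.Ico k i, g j with hSdef
        rw [if_pos hki, if_pos hki, hS]
        by_cases hIm : I ∈ Finset.Ico k i <;> by_cases hJm : J ∈ Finset.Ico k i
        · rw [if_pos hIm, if_pos hJm]
          rw [Finset.mem_Ico] at hIm hJm
          rw [if_neg (by tauto), if_neg (by tauto), show S + 1 - 1 = S by ring]; ring
        · rw [if_pos hIm, if_neg hJm]
          rw [Finset.mem_Ico] at hIm hJm
          rw [if_pos (by tauto), if_neg (by tauto)]
          rw [show S + 1 - 0 = S + 1 by ring, show -(S+1) = -S + (-1) by ring, zpow_add₀ hcne,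
            zpow_neg_one]
          ring
        · rw [if_neg hIm, if_pos hJm]
          rw [Finset.mem_Ico] at hIm hJm
          rw [if_neg (by tauto), if_pos (by tauto)]
          rw [show S + 0 - 1 = S + (-1) by ring, show -(S + (-1)) = -S + 1 by ring,
            zpow_add₀ hcne, zpow_one]
          ring
        · rw [if_neg hIm, if_neg hJm]
          rw [Finset.mem_Ico] at hIm hJm
          rw [if_neg (by tauto), if_neg (by tauto), show S + 0 - 0 = S by ring]; ring
      · simp [hki]
    calc Gg p r (fun j => g j + (if j = I then 1 else 0) - (if j = J then 1 else 0))
        = ∑ k ∈ Finset.range r, ∑ i ∈ Finset.range r,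
            ((if k < i then c ^ (-(∑ j ∈ Finset.Ico k i, g j)) else 0)
            + (c⁻¹ - 1) * (if k < i ∧ (k ≤ I ∧ I < i) ∧ ¬(k ≤ J ∧ J < i)
                then c ^ (-(∑ j ∈ Finset.Ico k i, g j)) else 0)
            + (c - 1) * (if k < i ∧ (k ≤ J ∧ J < i) ∧ ¬(k ≤ I ∧ I < i)
                then c ^ (-(∑ j ∈ Finset.Ico k i, g j)) else 0)) := by
          unfold Gg
          exact Finset.sum_congr rfl fun k hk => Finset.sum_congr rfl fun i hi => point k hk i hi
      _ = Gg p r g + (c⁻¹ - 1) * A + (c - 1) * B := by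
          unfold Gg
          rw [hA, hB]
          simp only [Finset.sum_add_distrib, Finset.mul_sum]
          rfl
  have hr2 : 2 ≤ r := by omega
  set x : ℝ := c⁻¹ with hxdef
  have hx0 : 0 ≤ x := by positivity
  have hx1 : x < 1 := by
    rw [hxdef]
    rw [inv_lt_one_iff₀]
    right; exact hc1
  -- A is at least the (I, I+1) term
  have hA1 : c ^ (-(g I)) ≤ A := by
    have hIr : I ∈ Finset.range r := Finset.mem_range.mpr (by omega)
    have hI1r : I + 1 ∈ Finset.range r := Finset.mem_range.mpr (by omega)
    have hnn : ∀ k i : ℕ,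
        (0:ℝ) ≤ (if k < i ∧ (k ≤ I ∧ I < i) ∧ ¬(k ≤ J ∧ J < i)
          then c ^ (-(∑ j ∈ Finset.Ico k i, g j)) else 0) := by
      intro k i
      split
      · positivity
      · exact le_refl 0
    have hterm : c ^ (-(g I)) = (if I < I + 1 ∧ (I ≤ I ∧ I < I + 1) ∧ ¬(I ≤ J ∧ J < I + 1)
        then c ^ (-(∑ j ∈ Finset.Ico I (I+1), g j)) else 0) := by
      rw [if_pos ⟨by omega, ⟨le_refl I, by omega⟩, by omega⟩]
      congr 2
      simp
    rw [hA, hterm]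
    calc (if I < I + 1 ∧ (I ≤ I ∧ I < I + 1) ∧ ¬(I ≤ J ∧ J < I + 1)
        then c ^ (-(∑ j ∈ Finset.Ico I (I+1), g j)) else 0)
        ≤ ∑ i ∈ Finset.range r, (if I < i ∧ (I ≤ I ∧ I < i) ∧ ¬(I ≤ J ∧ J < i)
            then c ^ (-(∑ j ∈ Finset.Ico I i, g j)) else 0) :=
          Finset.single_le_sum (fun i _ => hnn I i) hI1r
      _ ≤ _ :=
          Finset.single_le_sum (f := fun k => ∑ i ∈ Finset.range r,
            (if k < i ∧ (k ≤ I ∧ I < i) ∧ ¬(k ≤ J ∧ J < i)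
              then c ^ (-(∑ j ∈ Finset.Ico k i, g j)) else 0))
            (fun k _ => Finset.sum_nonneg fun i _ => hnn k i) hIr
  -- B is small
  have hB1 : B ≤ c ^ (-(g J)) * (1/(1-x)) * (1/(1-x)) := by
    have pointB : ∀ k ∈ Finset.range r, ∀ i ∈ Finset.range r,
        (if k < i ∧ (k ≤ J ∧ J < i) ∧ ¬(k ≤ I ∧ I < i)
          then c ^ (-(∑ j ∈ Finset.Ico k i, g j)) else 0)
        ≤ (if k ≤ J then c ^ (-(g J)) * x^(J-k) else 0) * (if J < i then x^(i-J-1) else 0) := by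
      intro k hk i hi
      by_cases hcond : k < i ∧ (k ≤ J ∧ J < i) ∧ ¬(k ≤ I ∧ I < i)
      · rw [if_pos hcond]
        obtain ⟨hki, ⟨hkJ, hJi⟩, -⟩ := hcond
        rw [if_pos hkJ, if_pos hJi]
        have hir : i < r := Finset.mem_range.mp hi
        have hJmem : J ∈ Finset.Ico k i := Finset.mem_Ico.mpr ⟨hkJ, hJi⟩
        have hcard : ((Finset.Ico k i).erase J).card = i - k - 1 := by
          rw [Finset.card_erase_of_mem hJmem, Nat.card_Ico]
        have hlow : (↑(i - k - 1) : ℤ) ≤ ∑ j ∈ (Finset.Ico k i).erase J, g j := by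
          have := Finset.card_nsmul_le_sum ((Finset.Ico k i).erase J) g 1 ?_
          · rw [hcard] at this
            simpa using this
          · intro j hj
            have hj' := Finset.mem_of_mem_erase hj
            rw [Finset.mem_Ico] at hj'
            exact hg1 j (by omega)
        have hS : g J + (↑(i - k - 1) : ℤ) ≤ ∑ j ∈ Finset.Ico k i, g j := by
          rw [← Finset.sum_erase_add _ _ hJmem]
          linarith
        have h1 : c ^ (-(∑ j ∈ Finset.Ico k i, g j)) ≤ c ^ (-(g J + (↑(i - k - 1) : ℤ))) :=
          zpow_le_zpow_right₀ hc1.le (by linarith)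
        have h2 : c ^ (-(g J + (↑(i - k - 1) : ℤ))) = c ^ (-(g J)) * x^(i-k-1) := by
          rw [show -(g J + (↑(i - k - 1) : ℤ)) = -(g J) + (-(↑(i - k - 1) : ℤ)) by ring,
            zpow_add₀ hcne]
          congr 1
          rw [zpow_neg, zpow_natCast, hxdef, inv_pow]
        have h3 : x^(J-k) * x^(i-J-1) = x^(i-k-1) := by
          rw [← pow_add]
          congr 1
          omega
        calc c ^ (-(∑ j ∈ Finset.Ico k i, g j)) ≤ c ^ (-(g J)) * x^(i-k-1) := h1.trans_eq h2
          _ = c ^ (-(g J)) * x^(J-k) * x^(i-J-1) := by rw [mul_assoc, h3]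
      · rw [if_neg hcond]
        have h1 : (0:ℝ) ≤ (if k ≤ J then c ^ (-(g J)) * x^(J-k) else 0) := by
          split
          · positivity
          · exact le_refl 0
        have h2 : (0:ℝ) ≤ (if J < i then x^(i-J-1) else 0) := by
          split
          · positivity
          · exact le_refl 0
        positivity
    have hsum1 : ∑ k ∈ Finset.range r, (if k ≤ J then c ^ (-(g J)) * x^(J-k) else 0)
        ≤ c ^ (-(g J)) * (1/(1-x)) := by
      have e1 : ∀ k, (if k ≤ J then c ^ (-(g J)) * x^(J-k) else 0)
          = c ^ (-(g J)) * (if k ≤ J then x^(J-k) else 0) := by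
        intro k
        rw [mul_ite, mul_zero]
      simp only [e1, ← Finset.mul_sum]
      have hsub : ∑ k ∈ Finset.range r, (if k ≤ J then x^(J-k) else 0)
          = ∑ k ∈ Finset.range (J+1), x^(J-k) := by
        rw [← Finset.sum_subset (Finset.range_subset_range.mpr (by omega : J + 1 ≤ r))]
        · exact Finset.sum_congr rfl fun k hk => if_pos (by
            have := Finset.mem_range.mp hk; omega)
        · intro k hk hnk
          rw [Finset.mem_range] at hnk
          exact if_neg (by omega)
      have hrefl : ∑ k ∈ Finset.range (J+1), x^(J-k) = ∑ k ∈ Finset.range (J+1), x^k := by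
        have h := Finset.sum_range_reflect (fun u => x^u) (J+1)
        calc ∑ k ∈ Finset.range (J+1), x^(J-k)
            = ∑ k ∈ Finset.range (J+1), x^(J+1-1-k) := by
              refine Finset.sum_congr rfl fun k hk => ?_
              congr 1
        _ = _ := h
      rw [hsub, hrefl]
      have := mygeom_le x hx0 hx1 (J+1)
      have hpow : (0:ℝ) ≤ c ^ (-(g J)) := by positivity
      exact mul_le_mul_of_nonneg_left this hpow
    have hsum2 : ∑ i ∈ Finset.range r, (if J < i then x^(i-J-1) else 0) ≤ 1/(1-x) := by
      have hsub : ∑ i ∈ Finset.range r, (if J < i then x^(i-J-1) else 0)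
          = ∑ i ∈ Finset.Ico (J+1) r, x^(i-J-1) := by
        rw [← Finset.sum_subset (fun i hi => Finset.mem_range.mpr (Finset.mem_Ico.mp hi).2)]
        · exact Finset.sum_congr rfl fun i hi => if_pos (by
            have := (Finset.mem_Ico.mp hi).1; omega)
        · intro i hi hni
          rw [Finset.mem_range] at hi
          rw [Finset.mem_Ico] at hni
          exact if_neg (by omega)
      rw [hsub, Finset.sum_Ico_eq_sum_range]
      have he : ∀ u ∈ Finset.range (r - (J+1)), x^(J+1+u-J-1) = x^u := by
        intro u hu
        congr 1
        omega
      rw [Finset.sum_congr rfl he]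
      exact mygeom_le x hx0 hx1 _
    have hBnn2 : (0:ℝ) ≤ ∑ i ∈ Finset.range r, (if J < i then x^(i-J-1) else 0) := by
      refine Finset.sum_nonneg fun i _ => ?_
      split
      · positivity
      · exact le_refl 0
    have hBnn1 : (0:ℝ) ≤ c ^ (-(g J)) * (1/(1-x)) := by
      have : (0:ℝ) < 1 - x := by linarith
      positivity
    calc B ≤ ∑ k ∈ Finset.range r, ∑ i ∈ Finset.range r,
          ((if k ≤ J then c ^ (-(g J)) * x^(J-k) else 0) * (if J < i then x^(i-J-1) else 0)) := by
          rw [hB]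
          exact Finset.sum_le_sum fun k hk => Finset.sum_le_sum fun i hi => pointB k hk i hi
      _ = (∑ k ∈ Finset.range r, (if k ≤ J then c ^ (-(g J)) * x^(J-k) else 0))
            * (∑ i ∈ Finset.range r, (if J < i then x^(i-J-1) else 0)) := by
          rw [Finset.sum_mul_sum]
      _ ≤ (c ^ (-(g J)) * (1/(1-x))) * (1/(1-x)) :=
          mul_le_mul hsum1 hsum2 hBnn2 hBnn1
  -- assemble
  rw [key]
  have hu : (0:ℝ) < c ^ (-(g I)) := by positivity
  have hvu : c ^ (-(g J)) * (c * c) ≤ c ^ (-(g I)) := by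
    have h1 : c ^ (-(g J)) ≤ c ^ (-(g I) + (-2)) :=
      zpow_le_zpow_right₀ hc1.le (by linarith)
    have h2 : c ^ (-(g I) + (-2)) * (c*c) = c ^ (-(g I)) := by
      rw [zpow_add₀ hcne]
      have : c ^ (-2 : ℤ) = (c*c)⁻¹ := by
        rw [zpow_neg, zpow_two]
      rw [this]
      field_simp
    calc c ^ (-(g J)) * (c*c) ≤ c ^ (-(g I) + (-2)) * (c*c) := by nlinarith
      _ = c ^ (-(g I)) := h2
  have hxc : (1:ℝ)/(1-x) = c/(c-1) := by
    rw [hxdef]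
    have hcm1 : c - 1 ≠ 0 := by intro h'; linarith
    field_simp
  rw [hxc] at hB1
  have hstep1 : (x - 1) * A ≤ (x - 1) * (c ^ (-(g I))) := by
    apply mul_le_mul_of_nonpos_left hA1
    linarith
  have hstep2 : (c - 1) * B ≤ (c - 1) * (c ^ (-(g J)) * (c/(c-1)) * (c/(c-1))) := by
    apply mul_le_mul_of_nonneg_left hB1
    linarith
  have hcm1 : c - 1 ≠ 0 := by intro h'; linarith
  have hstep3 : (c - 1) * (c ^ (-(g J)) * (c/(c-1)) * (c/(c-1))) = c ^ (-(g J)) * c * c / (c-1) := by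
    field_simp
  have hstep4 : c ^ (-(g J)) * c * c / (c-1) ≤ c ^ (-(g I)) / (c - 1) := by
    gcongr
    · linarith
  have hstep5 : c ^ (-(g I)) / (c - 1) ≤ c ^ (-(g I)) / 2 :=
    div_le_div_of_nonneg_left hu.le (by norm_num) (by linarith)
  have hstep6 : (x - 1) * (c ^ (-(g I))) ≤ (1/3 - 1) * (c ^ (-(g I))) := by
    apply mul_le_mul_of_nonneg_right ?_ hu.le
    have : c⁻¹ ≤ 3⁻¹ := inv_anti₀ (by norm_num) hc3
    rw [hxdef]
    norm_num at this ⊢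
    linarith
  linarith

theorem Gg_ge (p r q : ℕ) (hp3 : 3 ≤ p) (hr : 3 ≤ r) :
    ∀ n (g : ℕ → ℤ), (∑ j ∈ Finset.range (r-1), ((g j - q).natAbs)^2) = n →
    (∀ j, j < r - 1 → 1 ≤ g j) → (∑ j ∈ Finset.range (r-1), g j) = (q:ℤ)*((r:ℤ)-1) →
    Gg p r (fun _ => (q:ℤ)) ≤ Gg p r g := by
  intro n
  induction n using Nat.strong_induction_on with
  | _ n ih =>
    intro g hP hg1 hsum
    by_cases hall : ∀ j, j < r - 1 → g j = (q:ℤ)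
    · exact le_of_eq (Gg_congr p r (fun _ => (q:ℤ)) g (fun j hj => (hall j hj).symm))
    · push_neg at hall
      obtain ⟨j0, hj0, hj0ne⟩ := hall
      have hne : (Finset.range (r-1)).Nonempty := ⟨0, Finset.mem_range.mpr (by omega)⟩
      obtain ⟨I, hImem, hImin⟩ := Finset.exists_min_image (Finset.range (r-1)) g hne
      obtain ⟨J, hJmem, hJmax⟩ := Finset.exists_max_image (Finset.range (r-1)) g hne
      have hIr : I < r - 1 := Finset.mem_range.mp hImem
      have hJr : J < r - 1 := Finset.mem_range.mp hJmem
      have hcard : (Finset.range (r-1)).card = r - 1 := Finset.card_range _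
      have hrcast : ((r - 1 : ℕ) : ℤ) = (r:ℤ) - 1 := by
        have : 1 ≤ r := by omega
        push_cast [this]
        ring
      have hconst : ∀ z : ℤ, ∑ _j ∈ Finset.range (r-1), z = z * ((r:ℤ)-1) := by
        intro z
        rw [Finset.sum_const, hcard]
        rw [← hrcast]
        push_cast
        ring
      have hr1pos : (0:ℤ) < (r:ℤ) - 1 := by
        have : (3:ℤ) ≤ (r:ℤ) := by exact_mod_cast hr
        linarith
      have hgap : g I + 2 ≤ g J := by
        by_contra hcon
        push_neg at hcon
        have hlow : g I * ((r:ℤ)-1) ≤ (q:ℤ)*((r:ℤ)-1) := by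
          rw [← hsum, ← hconst (g I)]
          exact Finset.sum_le_sum hImin
        have hhigh : (q:ℤ)*((r:ℤ)-1) ≤ g J * ((r:ℤ)-1) := by
          rw [← hsum, ← hconst (g J)]
          exact Finset.sum_le_sum hJmax
        have h1 : g I ≤ (q:ℤ) := le_of_mul_le_mul_right hlow hr1pos
        have h2 : (q:ℤ) ≤ g J := le_of_mul_le_mul_right hhigh hr1pos
        have hq2 : (q:ℤ) = g I ∨ (q:ℤ) = g J := by omega
        rcases hq2 with hq | hq
        · have hstrict : (q:ℤ)*((r:ℤ)-1) < ∑ j ∈ Finset.range (r-1), g j := by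
            rw [← hconst (q:ℤ)]
            refine Finset.sum_lt_sum (fun j hj => hq ▸ hImin j hj) ⟨j0, Finset.mem_range.mpr hj0, ?_⟩
            have := hImin j0 (Finset.mem_range.mpr hj0)
            omega
          omega
        · have hstrict : ∑ j ∈ Finset.range (r-1), g j < (q:ℤ)*((r:ℤ)-1) := by
            rw [← hconst (q:ℤ)]
            refine Finset.sum_lt_sum (fun j hj => hq ▸ hJmax j hj) ⟨j0, Finset.mem_range.mpr hj0, ?_⟩
            have := hJmax j0 (Finset.mem_range.mpr hj0)
            omega
          omega
      have hIJ : I ≠ J := by intro h; rw [h] at hgap; omega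
      set g' : ℕ → ℤ := fun j => g j + (if j = I then 1 else 0) - (if j = J then 1 else 0)
        with hg'def
      have hg'I : g' I = g I + 1 := by simp [hg'def, hIJ]
      have hg'J : g' J = g J - 1 := by simp [hg'def, Ne.symm hIJ]
      have hg'other : ∀ j, j ≠ I → j ≠ J → g' j = g j := by
        intro j h1 h2; simp [hg'def, h1, h2]
      have hg'1 : ∀ j, j < r - 1 → 1 ≤ g' j := by
        intro j hj
        by_cases h1 : j = I
        · rw [h1, hg'I]; have := hg1 I hIr; omega
        · by_cases h2 : j = J
          · rw [h2, hg'J]; have := hg1 I hIr; omega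
          · rw [hg'other j h1 h2]; exact hg1 j hj
      have hsum' : ∑ j ∈ Finset.range (r-1), g' j = (q:ℤ)*((r:ℤ)-1) := by
        rw [hg'def]
        rw [Finset.sum_sub_distrib, Finset.sum_add_distrib,
          Finset.sum_ite_eq' _ I (fun _ => (1:ℤ)), Finset.sum_ite_eq' _ J (fun _ => (1:ℤ)),
          if_pos hImem, if_pos hJmem]
        rw [hsum]
        ring
      -- potential decreases
      have hPcast : ∀ h : ℕ → ℤ, ((∑ j ∈ Finset.range (r-1), ((h j - q).natAbs)^2 : ℕ) : ℤ)
          = ∑ j ∈ Finset.range (r-1), (h j - q)^2 := by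
        intro h
        push_cast
        exact Finset.sum_congr rfl fun j _ => by rw [sq_abs]
      have hpoint : ∀ j, (g' j - q)^2
          = (g j - q)^2 + (if j = I then 2*(g I - q) + 1 else 0)
            + (if j = J then -2*(g J - q) + 1 else 0) := by
        intro j
        by_cases h1 : j = I
        · subst h1
          rw [if_pos rfl, if_neg hIJ, hg'I]
          ring
        · by_cases h2 : j = J
          · subst h2
            rw [if_neg h1, if_pos rfl, hg'J]
            ring
          · rw [if_neg h1, if_neg h2, hg'other j h1 h2]
            ring
      have hPsum : ∑ j ∈ Finset.range (r-1), (g' j - q)^2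
          = (∑ j ∈ Finset.range (r-1), (g j - q)^2) + (2*(g I - q) + 1) + (-2*(g J - q) + 1) := by
        rw [Finset.sum_congr rfl fun j _ => hpoint j, Finset.sum_add_distrib,
          Finset.sum_add_distrib, Finset.sum_ite_eq' _ I, Finset.sum_ite_eq' _ J,
          if_pos hImem, if_pos hJmem]
      have hP' : (∑ j ∈ Finset.range (r-1), ((g' j - q).natAbs)^2) < n := by
        have hz : ((∑ j ∈ Finset.range (r-1), ((g' j - q).natAbs)^2 : ℕ) : ℤ) < (n : ℤ) := by
          rw [hPcast, hPsum, ← hP, hPcast]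
          omega
        exact_mod_cast hz
      exact le_of_lt (lt_of_le_of_lt (ih _ hP' g' rfl hg'1 hsum')
        (Gg_move p r hp3 g I J hIr hJr hIJ hg1 hgap))

theorem Gg_const (p r q : ℕ) (hp2 : 2 ≤ p) (hq : 1 ≤ q) (hr : 1 ≤ r) :
    Gg p r (fun _ => (q:ℤ))
      = ((((p:ℝ)^q)⁻¹)/(1-((p:ℝ)^q)⁻¹))
          * (((r:ℝ)-1) - ((((p:ℝ)^q)⁻¹)/(1-((p:ℝ)^q)⁻¹)) * (1 - (((p:ℝ)^q)⁻¹)^(r-1))) := by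
  set t : ℝ := ((p:ℝ)^q)⁻¹ with htdef
  have hp0 : (0:ℝ) < (p:ℝ) := by positivity
  have hp1 : (1:ℝ) < (p:ℝ) := by
    have : (2:ℝ) ≤ (p:ℝ) := by exact_mod_cast hp2
    linarith
  have hP1 : (1:ℝ) < (p:ℝ)^q := one_lt_pow₀ hp1 (by omega)
  have ht0 : 0 < t := by positivity
  have ht1 : t < 1 := by
    rw [htdef, inv_lt_one_iff₀]
    right; exact hP1
  have hpoint : ∀ k ∈ Finset.range r, ∀ i ∈ Finset.range r,
      (if k < i then (p:ℝ) ^ (-(∑ _j ∈ Finset.Ico k i, (q:ℤ))) else 0)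
      = (if k < i then t^(i-k) else 0) := by
    intro k _ i _
    by_cases hki : k < i
    · rw [if_pos hki, if_pos hki]
      rw [Finset.sum_const, Nat.card_Ico]
      have h1 : (i - k) • (q:ℤ) = ((q*(i-k) : ℕ) : ℤ) := by push_cast; ring
      rw [h1, zpow_neg, zpow_natCast, pow_mul, htdef, inv_pow]
    · rw [if_neg hki, if_neg hki]
  unfold Gg
  rw [Finset.sum_congr rfl fun k hk => Finset.sum_congr rfl fun i hi => hpoint k hk i hi]
  exact sumF t ht0 ht1 r hr

/-- If `(r-1) ∣ (s-1)` and `q = (s-1)/(r-1)`, then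
`min h_p = (1/(p^q-1)) (r - 1 - (1/(p^q-1))(1 - 1/p^{q(r-1)}))`,
expressed as: this value is the least element of the set of values of `h_p` on `A(s,r)`. -/
theorem stmt1 (p s r : ℕ) (hpp : p.Prime) (hp3 : 3 ≤ p) (hr : 3 ≤ r) (hrs : r < s)
    (hdvd : (r - 1) ∣ (s - 1)) :
    IsLeast {x : ℝ | ∃ a : ℕ → ℤ, Admissible s r a ∧ hp p r a = x}
      ((1 / ((p : ℝ) ^ ((s - 1) / (r - 1)) - 1)) *
        ((r : ℝ) - 1 - (1 / ((p : ℝ) ^ ((s - 1) / (r - 1)) - 1)) *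
          (1 - 1 / (p : ℝ) ^ (((s - 1) / (r - 1)) * (r - 1))))) := by
  set q : ℕ := (s - 1) / (r - 1) with hqdef
  have hqmul : q * (r - 1) = s - 1 := Nat.div_mul_cancel hdvd
  have hq1 : 1 ≤ q := by
    rcases Nat.eq_zero_or_pos q with h | h
    · exfalso
      rw [h] at hqmul
      simp at hqmul
      omega
    · exact h
  have hp0 : (0:ℝ) < (p:ℝ) := by positivity
  have hp1 : (1:ℝ) < (p:ℝ) := by
    have : (3:ℝ) ≤ (p:ℝ) := by exact_mod_cast hp3
    linarith
  have hP1 : (1:ℝ) < (p:ℝ)^q := one_lt_pow₀ hp1 (by omega)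
  have hPne : (p:ℝ)^q - 1 ≠ 0 := by intro h; linarith
  have hPne0 : (p:ℝ)^q ≠ 0 := by positivity
  set t : ℝ := ((p:ℝ)^q)⁻¹ with htdef
  have hfrac : t/(1-t) = 1/((p:ℝ)^q - 1) := by
    rw [htdef]
    field_simp
  have htpow : t^(r-1) = 1/(p:ℝ)^(q*(r-1)) := by
    rw [htdef, inv_pow, ← pow_mul, one_div]
  have hEeq : (t/(1-t)) * (((r:ℝ)-1) - (t/(1-t)) * (1 - t^(r-1)))
      = (1 / ((p : ℝ) ^ q - 1)) *
        ((r : ℝ) - 1 - (1 / ((p : ℝ) ^ q - 1)) * (1 - 1 / (p : ℝ) ^ (q * (r - 1)))) := by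
    rw [hfrac, htpow]
  have hGconst : Gg p r (fun _ => (q:ℤ))
      = (1 / ((p : ℝ) ^ q - 1)) *
        ((r : ℝ) - 1 - (1 / ((p : ℝ) ^ q - 1)) * (1 - 1 / (p : ℝ) ^ (q * (r - 1)))) := by
    rw [Gg_const p r q (by omega) hq1 (by omega), ← htdef, hEeq]
  have hscast : ((s - 1 : ℕ) : ℤ) = (s:ℤ) - 1 := by
    have : 1 ≤ s := by omega
    push_cast [this]
    ring
  have hsq : (q:ℤ) * ((r:ℤ) - 1) = (s:ℤ) - 1 := by
    have : ((q * (r-1) : ℕ) : ℤ) = ((s - 1 : ℕ) : ℤ) := by rw [hqmul]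
    rw [hscast] at this
    rw [← this]
    have h1 : 1 ≤ r := by omega
    push_cast [h1]
    ring
  constructor
  · -- membership: the equally spaced tuple
    refine ⟨fun i => (q:ℤ) * i, ⟨by simp, ?_, ?_⟩, ?_⟩
    · rw [← hsq]
      have h1 : 1 ≤ r := by omega
      push_cast [h1]
      ring
    · intro i hi
      have : (q:ℤ) ≥ 1 := by exact_mod_cast hq1
      push_cast
      nlinarith [this]
    · rw [hp_eq_Gg]
      rw [Gg_congr p r _ (fun _ => (q:ℤ)) (fun j hj => by push_cast; ring)]
      exact hGconst
  · -- lower bound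
    rintro x ⟨a, ⟨ha0, har, hinc⟩, rfl⟩
    rw [hp_eq_Gg]
    rw [← hGconst]
    apply Gg_ge p r q hp3 hr _ (fun j => a (j+1) - a j) rfl
    · intro j hj
      have := hinc j (by omega)
      omega
    · rw [Finset.sum_range_sub (fun j => a j)]
      rw [ha0] at *
      rw [har]
      rw [hsq]
      ring
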